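/- Let S be a split graph with independent part E and clique part K endowed with a semi-transitive orientation, and let x ∈ E be a vertex of type A (all edges to K oriented into x). Reversing all edges incident to x (making x a type B vertex, a source) yields again a semi-transitive orientation of S. The same holds for changing a type B vertex into a type A vertex. -/

import Mathlib

/-- `R` is an orientation of `G`: `R` holds only on edges, and each edge gets
exactly one direction. -/
def IsOrientation {V : Type*} (G : SimpleGraph V) (R : V → V → Prop) : Prop :=
  (∀ x y, R x y → G.Adj x y) ∧ ∀ x y, G.Adj x y → (R x y ↔ ¬ R y x)

/-- `R` has no directed cycles. -/
def Acyclic {V : Type*} (R : V → V → Prop) : Prop :=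
  ∀ v, ¬ Relation.TransGen R v v

/-- `R` is semi-transitive: acyclic, and every directed path `p 0 → ⋯ → p k`
whose endpoints are joined by the edge `p 0 → p k` is fully transitive. -/
def SemiTransitive {V : Type*} (R : V → V → Prop) : Prop :=
  Acyclic R ∧
  ∀ (k : ℕ) (p : Fin (k + 1) → V),
    (∀ i : Fin k, R (p i.castSucc) (p i.succ)) →
    R (p 0) (p (Fin.last k)) →
    ∀ i j : Fin (k + 1), i < j → R (p i) (p j)

/-- Along a directed path, any earlier vertex reaches any later one. -/
lemma chain_tg {V : Type*} {R : V → V → Prop} {k : ℕ} {p : Fin (k + 1) → V}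
    (hpath : ∀ i : Fin k, R (p i.castSucc) (p i.succ)) :
    ∀ i j : Fin (k + 1), i < j → Relation.TransGen R (p i) (p j) := by
  intro i j
  induction j using Fin.induction with
  | zero => intro h; exact absurd h (by simp)
  | succ m ih =>
    intro h
    have hle : i ≤ m.castSucc := by
      rw [Fin.le_def]
      have := Fin.lt_def.mp h
      simp only [Fin.val_succ] at this
      simp only [Fin.coe_castSucc]
      omega
    rcases eq_or_lt_of_le hle with he | hl
    · rw [he]; exact Relation.TransGen.single (hpath m)
    · exact (ih hl).tail (hpath m)

/-- Semi-transitivity is preserved by reversing all edges. -/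
lemma semiTransitive_swap {V : Type*} {R : V → V → Prop}
    (h : SemiTransitive R) : SemiTransitive (fun a b => R b a) := by
  obtain ⟨hac, htr⟩ := h
  constructor
  · intro v hv
    exact hac v (Relation.transGen_swap.mp hv)
  · intro k p hpath hshort i j hij
    have key := htr k (fun t => p t.rev) ?_ ?_ j.rev i.rev (Fin.rev_lt_rev.mpr hij)
    · simpa using key
    · intro m
      have h1 := hpath m.rev
      simp only [← Fin.rev_succ, ← Fin.rev_castSucc, Fin.rev_rev] at h1 ⊢
      exact h1
    · simpa [Fin.rev_last, Fin.rev_zero] using hshort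

/-- Core lemma: flipping a pure sink `x` (type A) preserves semi-transitivity. -/
lemma core_flip {V : Type*} (G : SimpleGraph V) (R : V → V → Prop)
    (hor : IsOrientation G R) (hst : SemiTransitive R) (x : V)
    (hA : ∀ u : V, G.Adj x u → R u x) :
    SemiTransitive
      (fun a b => ((a = x ∨ b = x) ∧ R b a) ∨ ((a ≠ x ∧ b ≠ x) ∧ R a b)) := by
  set R' : V → V → Prop :=
    fun a b => ((a = x ∨ b = x) ∧ R b a) ∨ ((a ≠ x ∧ b ≠ x) ∧ R a b) with hR'def
  have hirr : ∀ v, ¬ R v v := fun v h => hst.1 v (Relation.TransGen.single h)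
  -- no `R'`-edge enters `x`
  have hnoin : ∀ u, ¬ R' u x := by
    rintro u (⟨_, hxu⟩ | ⟨⟨_, hxx⟩, _⟩)
    · by_cases hu : u = x
      · exact hirr x (hu ▸ hxu)
      · have hadj : G.Adj x u := hor.1 x u hxu
        exact ((hor.2 x u hadj).mp hxu) (hA u hadj)
    · exact hxx rfl
  -- an `R'`-edge between non-`x` vertices is an `R`-edge
  have toR : ∀ a b, a ≠ x → R' a b → R a b := by
    rintro a b ha h
    have hcopy := h
    rcases h with ⟨ha' | hb', _⟩ | ⟨_, hr⟩
    · exact absurd ha' ha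
    · exact absurd (hb' ▸ hcopy) (hnoin a)
    · exact hr
  -- an `R'`-edge out of `x` reverses an `R`-edge
  have fromX : ∀ b, R' x b → R b x := by
    rintro b (⟨_, hr⟩ | ⟨⟨hxx, _⟩, _⟩)
    · exact hr
    · exact absurd rfl hxx
  have key : ∀ v w, Relation.TransGen R' v w →
      w ≠ x ∧ (v ≠ x → Relation.TransGen R v w) := by
    intro v w h
    induction h with
    | single h1 =>
      rename_i b
      have hb : b ≠ x := fun he => hnoin v (he ▸ h1)
      exact ⟨hb, fun hv => Relation.TransGen.single (toR _ _ hv h1)⟩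
    | tail h1 h2 ih =>
      rename_i b c
      have hc : c ≠ x := fun he => hnoin b (he ▸ h2)
      exact ⟨hc, fun hv => (ih.2 hv).tail (toR _ _ ih.1 h2)⟩
  have hacyc : Acyclic R' := by
    intro v hv
    by_cases hvx : v = x
    · exact (key v v hv).1 hvx
    · exact hst.1 v ((key v v hv).2 hvx)
  refine ⟨hacyc, ?_⟩
  intro k p hpath hshort i j hij
  by_cases hex : ∃ t : Fin (k + 1), p t = x
  · -- `x` occurs on the path; it must be the first vertex
    obtain ⟨t0, ht0⟩ := hex
    have h0 : p 0 = x := by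
      by_cases h : t0 = 0
      · exact h ▸ ht0
      · obtain ⟨m, rfl⟩ := Fin.eq_succ_of_ne_zero h
        exact absurd (ht0 ▸ hpath m) (hnoin _)
    have hne : ∀ t : Fin (k + 1), t ≠ 0 → p t ≠ x := by
      intro t ht he
      refine hacyc x ?_
      have hc := chain_tg hpath 0 t (Fin.pos_of_ne_zero ht)
      rw [h0, he] at hc
      exact hc
    rcases Nat.eq_zero_or_pos k with hk | hk
    · subst hk
      have hi := i.isLt
      have hj := j.isLt
      have : i = j := Fin.ext (by omega)
      rw [this] at hij
      exact absurd hij (lt_irrefl j)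
    -- build the `R`-path  p 1 → p 2 → ⋯ → p k → x  with shortcut p 1 → x
    · set q : Fin (k + 1) → V :=
        fun a => if h : (a : ℕ) < k then p ⟨(a : ℕ) + 1, by omega⟩ else x with hq
      have hqval : ∀ (t : Fin (k + 1)) (ht : 1 ≤ (t : ℕ)),
          q ⟨(t : ℕ) - 1, by omega⟩ = p t := by
        intro t ht
        have hlt : ((⟨(t : ℕ) - 1, by omega⟩ : Fin (k + 1)) : ℕ) < k := by
          simp only []
          omega
        rw [hq]
        simp only [hlt, dif_pos]
        congr 1
        ext
        simp only []
        omega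
      have hqlast : q (Fin.last k) = x := by
        rw [hq]
        simp
      have hp1x : R (p ⟨1, by omega⟩) x := by
        have h01 := hpath ⟨0, hk⟩
        have e1 : (⟨0, hk⟩ : Fin k).castSucc = (0 : Fin (k + 1)) := by
          ext; simp
        have e2 : (⟨0, hk⟩ : Fin k).succ = (⟨1, by omega⟩ : Fin (k + 1)) := by
          ext; simp
        rw [e1, e2, h0] at h01
        exact fromX _ h01
      have hplastx : R (p (Fin.last k)) x := by
        rw [h0] at hshort
        exact fromX _ hshort
      have hqpath : ∀ m : Fin k, R (q m.castSucc) (q m.succ) := by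
        intro m
        have hcs : q m.castSucc = p ⟨(m : ℕ) + 1, by omega⟩ := by
          rw [hq]
          have : ((m.castSucc : Fin (k + 1)) : ℕ) < k := by simp [m.isLt]
          simp only [this, dif_pos]
          congr 1
        by_cases hm : (m : ℕ) + 1 < k
        · have hsc : q m.succ = p ⟨(m : ℕ) + 2, by omega⟩ := by
            rw [hq]
            have : ((m.succ : Fin (k + 1)) : ℕ) < k := by simpa using hm
            simp only [this, dif_pos]
            congr 1
          rw [hcs, hsc]
          have hstep := hpath ⟨(m : ℕ) + 1, by omega⟩
          have e1 : ((⟨(m : ℕ) + 1, by omega⟩ : Fin k)).castSucc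
              = (⟨(m : ℕ) + 1, by omega⟩ : Fin (k + 1)) := by ext; simp
          have e2 : ((⟨(m : ℕ) + 1, by omega⟩ : Fin k)).succ
              = (⟨(m : ℕ) + 2, by omega⟩ : Fin (k + 1)) := by ext; simp
          rw [e1, e2] at hstep
          refine toR _ _ ?_ hstep
          exact hne _ (by simp [Fin.ext_iff])
        · have hmk : (m : ℕ) + 1 = k := by have := m.isLt; omega
          have hsc : q m.succ = x := by
            rw [hq]
            have : ¬ ((m.succ : Fin (k + 1)) : ℕ) < k := by simp; omega
            simp only [this, dif_neg, not_false_iff]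
          rw [hcs, hsc]
          have : (⟨(m : ℕ) + 1, by omega⟩ : Fin (k + 1)) = Fin.last k := by
            ext; simp [hmk]
          rw [this]
          exact hplastx
      have hqshort : R (q 0) (q (Fin.last k)) := by
        have hq0 : q 0 = p ⟨1, by omega⟩ := by
          rw [hq]
          simp only [Fin.val_zero, hk, dif_pos]
          exact dif_pos hk
        rw [hq0, hqlast]
        exact hp1x
      have hq' := hst.2 k q hqpath hqshort
      -- now conclude
      by_cases hi0 : i = 0
      · subst hi0
        have hj0 : j ≠ 0 := by
          intro h
          rw [h] at hij
          exact absurd hij (lt_irrefl _)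
        have hj1 : 1 ≤ (j : ℕ) := by
          rcases Nat.eq_zero_or_pos (j : ℕ) with h | h
          · exact absurd (Fin.ext h) hj0
          · exact h
        have hRj : R (p j) x := by
          rw [← hqval j hj1, ← hqlast]
          refine hq' _ _ ?_
          rw [Fin.lt_def]
          simp only [Fin.val_last]
          have := j.isLt
          omega
        exact Or.inl ⟨Or.inl h0, h0 ▸ hRj⟩
      · have hj0 : j ≠ 0 := by
          intro h
          rw [h] at hij
          exact absurd (lt_trans hij (Fin.pos_of_ne_zero hi0)) (lt_irrefl _)
        have hi1 : 1 ≤ (i : ℕ) := by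
          rcases Nat.eq_zero_or_pos (i : ℕ) with h | h
          · exact absurd (Fin.ext h) hi0
          · exact h
        have hj1 : 1 ≤ (j : ℕ) := by
          rcases Nat.eq_zero_or_pos (j : ℕ) with h | h
          · exact absurd (Fin.ext h) hj0
          · exact h
        have hRij : R (p i) (p j) := by
          rw [← hqval i hi1, ← hqval j hj1]
          refine hq' _ _ ?_
          rw [Fin.lt_def]
          simp only []
          have hlt := Fin.lt_def.mp hij
          omega
        exact Or.inr ⟨⟨hne i hi0, hne j hj0⟩, hRij⟩
  · -- `x` is not on the path: everything happens in `R`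
    push_neg at hex
    have hpath' : ∀ m : Fin k, R (p m.castSucc) (p m.succ) :=
      fun m => toR _ _ (hex _) (hpath m)
    have hshort' : R (p 0) (p (Fin.last k)) := toR _ _ (hex _) hshort
    exact Or.inr ⟨⟨hex i, hex j⟩, hst.2 k p hpath' hshort' i j hij⟩

/-- Semi-transitivity transfers along pointwise equivalent relations. -/
lemma semiTransitive_congr {V : Type*} {S T : V → V → Prop}
    (h : ∀ a b, S a b ↔ T a b) (hs : SemiTransitive S) : SemiTransitive T := by
  have he : S = T := by funext a b; exact propext (h a b)
  exact he ▸ hs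

theorem flip_type_A_B {V : Type*} (G : SimpleGraph V) (K : Set V)
    (hclique : ∀ u ∈ K, ∀ v ∈ K, u ≠ v → G.Adj u v)
    (hind : ∀ u ∉ K, ∀ v ∉ K, ¬ G.Adj u v)
    (R : V → V → Prop) (hor : IsOrientation G R) (hst : SemiTransitive R)
    (x : V) (hx : x ∉ K)
    (hAB : (∀ u : V, G.Adj x u → R u x) ∨ (∀ u : V, G.Adj x u → R x u)) :
    IsOrientation G
      (fun a b => ((a = x ∨ b = x) ∧ R b a) ∨ ((a ≠ x ∧ b ≠ x) ∧ R a b)) ∧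
    SemiTransitive
      (fun a b => ((a = x ∨ b = x) ∧ R b a) ∨ ((a ≠ x ∧ b ≠ x) ∧ R a b)) := by
  constructor
  · constructor
    · rintro a b (⟨_, h⟩ | ⟨_, h⟩)
      · exact (hor.1 b a h).symm
      · exact hor.1 a b h
    · intro a b hadj
      have h1 := hor.2 a b hadj
      have h2 := hor.2 b a hadj.symm
      by_cases ha : a = x <;> by_cases hb : b = x <;> tauto
  · rcases hAB with hA | hB
    · exact core_flip G R hor hst x hA
    · have hor' : IsOrientation G (fun a b => R b a) :=
        ⟨fun a b h => (hor.1 b a h).symm, fun a b hadj => hor.2 b a hadj.symm⟩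
      have h1 := core_flip G (fun a b => R b a) hor' (semiTransitive_swap hst) x hB
      have h2 := semiTransitive_swap h1
      refine semiTransitive_congr ?_ h2
      intro a b
      constructor
      · rintro (⟨hd, hr⟩ | ⟨hd, hr⟩)
        · exact Or.inl ⟨hd.symm, hr⟩
        · exact Or.inr ⟨⟨hd.2, hd.1⟩, hr⟩
      · rintro (⟨hd, hr⟩ | ⟨hd, hr⟩)
        · exact Or.inl ⟨hd.symm, hr⟩
        · exact Or.inr ⟨⟨hd.2, hd.1⟩, hr⟩
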